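/- Let l, r be real numbers with 2 < l < 3, 0 < r < 1/2 and (l−2)² + r² < 1. Then there exists T > 0 such that for all θ₀, φ₀, v, w ∈ ℝ with v² + w² = 1, there exists t ∈ [0, T] such that NOT( |cos(θ₀ + t v) − cos(φ₀ + t w)| ≤ 2r and cos(θ₀ + t v) + cos(φ₀ + t w) ≤ 2l − 4 ). -/

import Mathlib

open Real

lemma cos_lip (u v : ℝ) : |cos u - cos v| ≤ |u - v| := by
  rw [Real.cos_sub_cos]
  have h1 : |sin ((u+v)/2)| ≤ 1 := Real.abs_sin_le_one _
  have h2 : |sin ((u-v)/2)| ≤ |(u-v)/2| := Real.abs_sin_le_abs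
  calc |(-2) * sin ((u+v)/2) * sin ((u-v)/2)|
      = 2 * |sin ((u+v)/2)| * |sin ((u-v)/2)| := by
        rw [abs_mul, abs_mul]; norm_num
    _ ≤ 2 * 1 * |(u-v)/2| := by
        apply mul_le_mul _ h2 (abs_nonneg _) (by norm_num)
        nlinarith [abs_nonneg (sin ((u+v)/2))]
    _ = |u - v| := by
        rw [abs_div, abs_two]
        ring

lemma abs_sin_add_nat_mul_pi (w : ℝ) (j : ℕ) : |sin (w + j*π)| = |sin w| := by
  induction j with
  | zero => norm_num
  | succ n ih =>
    have h : w + ((n:ℝ)+1)*π = (w + n*π) + π := by ring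
    push_cast
    rw [h, Real.sin_add_pi, abs_neg]
    exact_mod_cast ih

lemma abs_sin_add_int_mul_pi (w : ℝ) (n : ℤ) : |sin (w + n*π)| = |sin w| := by
  have h : sin (w + n*π) = sin w * cos (n*π) + cos w * sin (n*π) := Real.sin_add _ _
  rw [h, Real.sin_int_mul_pi, mul_zero, add_zero, abs_mul]
  have hc : |cos ((n:ℝ)*π)| = 1 := by
    have h1 : sin ((n:ℝ)*π) = 0 := Real.sin_int_mul_pi n
    have h2 := Real.sin_sq_add_cos_sq ((n:ℝ)*π)
    rw [← Real.sqrt_sq_eq_abs]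
    rw [h1] at h2
    rw [show cos ((n:ℝ)*π)^2 = 1 by nlinarith]
    exact Real.sqrt_one
  rw [hc, mul_one]

lemma exists_int_near {r z : ℝ} (hr0 : 0 ≤ r) (hr1 : r ≤ 1) (h : |sin z| ≤ r) :
    ∃ n : ℤ, |z - n*π| ≤ arcsin r := by
  have hπ := Real.pi_pos
  refine ⟨round (z/π), ?_⟩
  set n : ℤ := round (z/π) with hn
  set e : ℝ := z - n*π with he
  have he2 : |e| ≤ π/2 := by
    have h1 : |z/π - n| ≤ 1/2 := abs_sub_round (z/π)
    have h2 : e = π * (z/π - n) := by field_simp [he]; ring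
    rw [h2, abs_mul, abs_of_pos hπ]
    nlinarith
  have hs : |sin e| = |sin z| := by
    rw [show z = e + n*π by rw [he]; ring] 
    exact (abs_sin_add_int_mul_pi e n).symm
  by_contra hcon
  push_neg at hcon
  have hm : arcsin r < |e| := hcon
  have h1 : sin (arcsin r) < sin |e| :=
    Real.sin_lt_sin_of_lt_of_le_pi_div_two (by
      have := Real.arcsin_nonneg.2 hr0; linarith [Real.pi_pos]) he2 hm
  rw [Real.sin_arcsin (by linarith) hr1] at h1
  have h2 : sin |e| = |sin e| := by
    rcases le_or_gt 0 e with hh | hh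
    · rw [abs_of_nonneg hh, abs_of_nonneg]
      apply Real.sin_nonneg_of_nonneg_of_le_pi hh
      rw [abs_of_nonneg hh] at he2; linarith
    · rw [abs_of_neg hh, Real.sin_neg, abs_of_nonpos]
      have : 0 ≤ sin (-e) := by
        apply Real.sin_nonneg_of_nonneg_of_le_pi (by linarith)
        rw [abs_of_neg hh] at he2; linarith
      rw [Real.sin_neg] at this; linarith
  rw [h2, hs] at h1
  linarith

lemma lattice {m δ : ℝ} (c : ℝ) (hm0 : 0 < m) (hm : m < π/4) (hδ : |δ| ≤ π/2) (J : ℕ)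
    (h : ∀ j : ℕ, j ≤ J → ∃ n : ℤ, |c + j*δ - n*π| ≤ m) : |(J:ℝ)*δ| ≤ 2*m := by
  have hπ := Real.pi_pos
  have key : ∀ j : ℕ, j ≤ J → ∃ n : ℤ, |c - n*π| ≤ m ∧ |c + j*δ - n*π| ≤ m := by
    intro j
    induction j with
    | zero =>
      intro _
      obtain ⟨n, hn⟩ := h 0 (Nat.zero_le _)
      norm_num at hn
      exact ⟨n, hn, by norm_num; exact hn⟩
    | succ k ih =>
      intro hk
      obtain ⟨n, hn0, hnk⟩ := ih (by omega)
      obtain ⟨n', hn'⟩ := h (k+1) hk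
      push_cast at hn'
      have heq : n' = n := by
        have hd : ((n':ℝ) - n)*π = (c + k*δ - n*π) + δ - (c + (k+1)*δ - n'*π) := by
          push_cast; ring
        have h2 : |((n':ℝ) - n)*π| < π := by
          rw [hd]
          calc |(c + k*δ - n*π) + δ - (c + (k+1)*δ - n'*π)|
              ≤ |c + k*δ - n*π| + |δ| + |c + (k+1)*δ - n'*π| := by
                have := abs_sub (c + k*δ - n*π + δ) (c + (k+1)*δ - n'*π)
                have := abs_add_le (c + k*δ - n*π) δ
                calc |(c + k*δ - n*π) + δ - (c + (k+1)*δ - n'*π)|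
                    ≤ |(c + k*δ - n*π) + δ| + |c + (k+1)*δ - n'*π| := abs_sub _ _
                  _ ≤ |c + k*δ - n*π| + |δ| + |c + (k+1)*δ - n'*π| := by
                      have := abs_add_le (c + k*δ - n*π) δ; linarith
            _ < π := by linarith
        have h3 : |(n':ℝ) - n| < 1 := by
          rw [abs_mul, abs_of_pos hπ] at h2
          by_contra hc
          push_neg at hc
          nlinarith
        have h4 : |n' - n| < 1 := by exact_mod_cast (by push_cast; exact h3 : |((n' - n : ℤ):ℝ)| < 1)
        rw [abs_lt] at h4
        omega
      subst heq
      exact ⟨n', hn0, by push_cast; exact hn'⟩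
  obtain ⟨n, h0, hJ'⟩ := key J le_rfl
  have : (J:ℝ)*δ = (c + J*δ - n*π) - (c - n*π) := by ring
  rw [this]
  calc |(c + J*δ - n*π) - (c - n*π)| ≤ |c + J*δ - n*π| + |c - n*π| := abs_sub _ _
    _ ≤ 2*m := by linarith

set_option maxHeartbeats 2000000 in
lemma core {r a : ℝ} (hr0 : 0 < r) (hr : r < 1/2) (ha0 : 0 < a) (hra : a^2 + r^2 < 1) :
    ∃ L : ℝ, 0 < L ∧ ∀ κ x₀ y₀ : ℝ, 0 ≤ κ → κ ≤ 1 →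
      ∃ x ∈ Set.Icc x₀ (x₀ + L),
        r < |sin x * sin (y₀ + κ * (x - x₀))| ∨ a < cos x * cos (y₀ + κ * (x - x₀)) := by
  have hπ := Real.pi_pos
  set m := arcsin r with hmdef
  have hm0 : 0 < m := Real.arcsin_pos.2 hr0
  have hsm : sin m = r := Real.sin_arcsin (by linarith) (by linarith)
  have hm4 : m < π/4 := by
    by_contra hc
    push_neg at hc
    have h1 : sin (π/4) ≤ sin m := by
      rcases eq_or_lt_of_le hc with h | h
      · rw [h]
      · exact le_of_lt (Real.sin_lt_sin_of_lt_of_le_pi_div_two (by linarith) 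
          (Real.arcsin_le_pi_div_two r) h)
    rw [Real.sin_pi_div_four, hsm] at h1
    have : (1:ℝ) < Real.sqrt 2 := by
      rw [show (1:ℝ) = Real.sqrt 1 by simp]
      exact Real.sqrt_lt_sqrt (by norm_num) (by norm_num)
    linarith
  have hsq : a < Real.sqrt (1 - r^2) := (Real.lt_sqrt ha0.le).2 (by linarith)
  set ε := min (1/2 - r) (Real.sqrt (1 - r^2) - a) with hεdef
  have hε : 0 < ε := lt_min (by linarith) (by linarith)
  obtain ⟨J, hJgt⟩ := exists_nat_gt (4*m/ε)
  have hJpos : 0 < (J:ℝ) := lt_of_le_of_lt (by positivity) hJgt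
  have hJm : 4*m/(J:ℝ) < ε := by
    rw [div_lt_iff₀ hJpos]
    rw [div_lt_iff₀ hε] at hJgt
    linarith [mul_comm ε (J:ℝ)]
  set η := 2*m/(J:ℝ) with hηdef
  have hη0 : 0 < η := by positivity
  have h2η : 2*η < ε := by
    rw [hηdef]; rw [show 2*(2*m/(J:ℝ)) = 4*m/(J:ℝ) by ring]; exact hJm
  refine ⟨((J:ℝ)+6)*π, by positivity, ?_⟩
  intro κ x₀ y₀ hκ0 hκ1
  by_contra hcon
  push_neg at hcon
  -- hcon : ∀ x ∈ Icc, |sin x * sin (y x)| ≤ r ∧ cos x * cos (y x) ≤ a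
  set y : ℝ → ℝ := fun x => y₀ + κ * (x - x₀) with hydef
  set x₁ : ℝ := π/2 + π * (⌈(x₀ - π/2)/π⌉ : ℤ) with hx₁def
  clear_value y x₁
  have hx₁l : x₀ ≤ x₁ := by
    have h1 : (x₀ - π/2)/π ≤ (⌈(x₀ - π/2)/π⌉ : ℤ) := Int.le_ceil _
    rw [hx₁def]
    rw [div_le_iff₀ hπ] at h1
    linarith
  have hx₁u : x₁ ≤ x₀ + π := by
    have h1 : ((⌈(x₀ - π/2)/π⌉ : ℤ) : ℝ) < (x₀ - π/2)/π + 1 := Int.ceil_lt_add_one _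
    have h2 : π * ((x₀ - π/2)/π) = x₀ - π/2 := by field_simp
    have h3 := mul_lt_mul_of_pos_left h1 hπ
    rw [mul_add, h2, mul_one] at h3
    rw [hx₁def]
    linarith
  have habs1 : |sin x₁| = 1 := by
    have hc : cos x₁ = 0 := by
      rw [hx₁def, Real.cos_add, Real.cos_pi_div_two, Real.sin_pi_div_two, mul_comm π _,
        Real.sin_int_mul_pi]
      ring
    have h2 := Real.sin_sq_add_cos_sq x₁
    rw [hc] at h2
    rw [← Real.sqrt_sq_eq_abs, show sin x₁^2 = 1 by nlinarith [h2], Real.sqrt_one]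
  -- the grid points
  have hXmem : ∀ j : ℕ, j ≤ J → (x₁ + j*π) ∈ Set.Icc x₀ (x₀ + ((J:ℝ)+6)*π) := by
    intro j hj
    constructor
    · have : (0:ℝ) ≤ j*π := by positivity
      linarith
    · have hjJ : (j:ℝ) ≤ (J:ℝ) := by exact_mod_cast hj
      have h4 := mul_le_mul_of_nonneg_right hjJ hπ.le
      linarith
  have hgrid : ∀ j : ℕ, j ≤ J → |sin (y x₁ + j*(κ*π))| ≤ r := by
    intro j hj
    have h1 := (hcon (x₁ + j*π) (hXmem j hj)).1
    have h2 : |sin (x₁ + j*π)| = 1 := by rw [abs_sin_add_nat_mul_pi]; exact habs1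
    rw [abs_mul, h2, one_mul] at h1
    have h3 : y₀ + κ * (x₁ + j*π - x₀) = y x₁ + j*(κ*π) := by simp only [hydef]; ring
    rw [h3] at h1
    exact h1
  -- escape helpers bound
  have hx₁mem : x₁ ∈ Set.Icc x₀ (x₀ + ((J:ℝ)+6)*π) := by
    have := hXmem 0 (Nat.zero_le _); norm_num at this; exact ⟨this.1, this.2⟩
  have hy1 : |sin (y x₁)| ≤ r := by
    have := hgrid 0 (Nat.zero_le _); norm_num at this; exact this
  rcases le_or_gt κ (1/2) with hκh | hκh
  · -- Case A : κ small, δ = κ*π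
    have hδabs : |κ*π| ≤ π/2 := by
      rw [abs_of_nonneg (mul_nonneg hκ0 hπ.le)]
      have := mul_le_mul_of_nonneg_right hκh hπ.le
      linarith
    have hlat : |(J:ℝ)*(κ*π)| ≤ 2*m := by
      apply lattice (y x₁) hm0 hm4 hδabs J
      intro j hj
      exact exists_int_near hr0.le (by linarith) (hgrid j hj)
    have hκη : κ*π ≤ η := by
      rw [abs_of_nonneg (mul_nonneg hJpos.le (mul_nonneg hκ0 hπ.le))] at hlat
      rw [hηdef]
      rw [le_div_iff₀ hJpos]
      linarith [hlat]
    -- |cos (y x₁)| ≥ sqrt(1 - r²)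
    have hcos1 : Real.sqrt (1 - r^2) ≤ |cos (y x₁)| := by
      have hy1' := abs_le.1 hy1
      have h1 : sin (y x₁)^2 ≤ r^2 := sq_le_sq' hy1'.1 hy1'.2
      have h2 : 1 - r^2 ≤ cos (y x₁)^2 := by
        linarith [Real.sin_sq_add_cos_sq (y x₁)]
      calc Real.sqrt (1 - r^2) ≤ Real.sqrt (cos (y x₁)^2) := Real.sqrt_le_sqrt h2
        _ = |cos (y x₁)| := Real.sqrt_sq_eq_abs _
    rcases le_or_gt 0 (cos (y x₁)) with hs | hs
    · -- use x̃ with cos = 1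
      set xt : ℝ := 2*π*(⌈x₁/(2*π)⌉:ℤ) with hxtdef
      clear_value xt
      have hxt1 : x₁ ≤ xt := by
        have h1 : x₁/(2*π) ≤ ((⌈x₁/(2*π)⌉:ℤ):ℝ) := Int.le_ceil _
        rw [div_le_iff₀ (by positivity)] at h1
        rw [hxtdef]; linarith
      have hxt2 : xt ≤ x₁ + 2*π := by
        have h1 : ((⌈x₁/(2*π)⌉:ℤ):ℝ) < x₁/(2*π) + 1 := Int.ceil_lt_add_one _
        have h2 : (2*π) * (x₁/(2*π)) = x₁ := by field_simp
        have h3 := mul_lt_mul_of_pos_left h1 (by positivity : (0:ℝ) < 2*π)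
        rw [mul_add, h2, mul_one] at h3
        rw [hxtdef]; linarith
      have hcxt : cos xt = 1 := by
        rw [hxtdef, mul_comm (2*π) _]
        exact_mod_cast Real.cos_int_mul_two_pi _
      have hxtmem : xt ∈ Set.Icc x₀ (x₀ + ((J:ℝ)+6)*π) := by
        constructor
        · linarith
        · have h5 := mul_nonneg hJpos.le hπ.le
          linarith
      have hile := (hcon xt hxtmem).2
      rw [hcxt, one_mul] at hile
      have hile' : cos (y xt) ≤ a := by simp only [hydef]; exact hile
      have hyd : |y xt - y x₁| ≤ 2*η := by
        have h1 : y xt - y x₁ = κ*(xt - x₁) := by simp only [hydef]; ring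
        rw [h1, abs_of_nonneg (mul_nonneg hκ0 (by linarith))]
        have h2 := mul_le_mul_of_nonneg_left (show xt - x₁ ≤ 2*π by linarith) hκ0
        linarith [h2, hκη]
      have hlip := cos_lip (y xt) (y x₁)
      have habs : |cos (y x₁)| = cos (y x₁) := abs_of_nonneg hs
      rw [habs] at hcos1
      have hεle : ε ≤ Real.sqrt (1 - r^2) - a := min_le_right _ _
      have : a < cos (y xt) := by
        have := abs_le.1 hlip
        linarith
      linarith
    · -- use x̃ with cos = -1
      set xt : ℝ := π + 2*π*(⌈(x₁ - π)/(2*π)⌉:ℤ) with hxtdef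
      clear_value xt
      have hxt1 : x₁ ≤ xt := by
        have h1 : (x₁-π)/(2*π) ≤ ((⌈(x₁-π)/(2*π)⌉:ℤ):ℝ) := Int.le_ceil _
        rw [div_le_iff₀ (by positivity)] at h1
        rw [hxtdef]; linarith
      have hxt2 : xt ≤ x₁ + 2*π := by
        have h1 : ((⌈(x₁-π)/(2*π)⌉:ℤ):ℝ) < (x₁-π)/(2*π) + 1 := Int.ceil_lt_add_one _
        have h2 : (2*π) * ((x₁-π)/(2*π)) = x₁ - π := by field_simp
        have h3 := mul_lt_mul_of_pos_left h1 (by positivity : (0:ℝ) < 2*π)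
        rw [mul_add, h2, mul_one] at h3
        rw [hxtdef]; linarith
      have hcxt : cos xt = -1 := by
        rw [hxtdef, mul_comm (2*π) _]
        rw [show π + (⌈(x₁ - π)/(2*π)⌉:ℤ)*(2*π) = π + (⌈(x₁ - π)/(2*π)⌉:ℤ)*(2*π) from rfl]
        rw [Real.cos_add_int_mul_two_pi π _]
        exact Real.cos_pi
      have hxtmem : xt ∈ Set.Icc x₀ (x₀ + ((J:ℝ)+6)*π) := by
        constructor
        · linarith
        · have h5 := mul_nonneg hJpos.le hπ.le
          linarith
      have hile := (hcon xt hxtmem).2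
      rw [hcxt] at hile
      have hile' : -cos (y xt) ≤ a := by simp only [hydef]; linarith
      have hyd : |y xt - y x₁| ≤ 2*η := by
        have h1 : y xt - y x₁ = κ*(xt - x₁) := by simp only [hydef]; ring
        rw [h1, abs_of_nonneg (mul_nonneg hκ0 (by linarith))]
        have h2 := mul_le_mul_of_nonneg_left (show xt - x₁ ≤ 2*π by linarith) hκ0
        linarith [h2, hκη]
      have hlip := cos_lip (y xt) (y x₁)
      have habs : |cos (y x₁)| = -(cos (y x₁)) := abs_of_neg hs
      rw [habs] at hcos1
      have hεle : ε ≤ Real.sqrt (1 - r^2) - a := min_le_right _ _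
      have : a < -cos (y xt) := by
        have := abs_le.1 hlip
        linarith
      linarith
  · -- Case B : κ near 1, δ = (κ-1)*π
    have hδabs : |(κ-1)*π| ≤ π/2 := by
      rw [abs_mul, abs_of_pos hπ, abs_of_nonpos (by linarith : κ - 1 ≤ 0)]
      have := mul_le_mul_of_nonneg_right (show -(κ-1) ≤ 1/2 by linarith) hπ.le
      linarith
    have hlat : |(J:ℝ)*((κ-1)*π)| ≤ 2*m := by
      apply lattice (y x₁) hm0 hm4 hδabs J
      intro j hj
      apply exists_int_near hr0.le (by linarith)
      have h1 : |sin (y x₁ + j*((κ-1)*π) + j*π)| = |sin (y x₁ + j*((κ-1)*π))| :=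
        abs_sin_add_nat_mul_pi _ j
      rw [show y x₁ + (j:ℝ)*((κ-1)*π) + j*π = y x₁ + j*(κ*π) by ring] at h1
      rw [← h1]
      exact hgrid j hj
    have hκη : (1-κ)*π ≤ η := by
      rw [abs_mul, abs_mul, abs_of_pos hπ, abs_of_nonneg hJpos.le,
        abs_of_nonpos (by linarith : κ-1 ≤ 0)] at hlat
      rw [hηdef, le_div_iff₀ hJpos]
      linarith [hlat]
    -- near-diagonal escape
    set z₁ : ℝ := x₁ - y x₁ with hz₁def
    set c₀ : ℝ := cos z₁ with hc₀def
    set τ : ℝ := if 0 ≤ c₀ then π else 0 with hτdef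
    set S : ℝ := x₁ + y x₁ with hSdef
    set n : ℤ := ⌈(S - τ)/(2*π)⌉ with hndef
    set V : ℝ := τ + 2*π*n with hVdef
    clear_value z₁ c₀ τ S n V
    have hV1 : S ≤ V := by
      have h1 : (S - τ)/(2*π) ≤ ((n:ℤ):ℝ) := by rw [hndef]; exact Int.le_ceil _
      rw [div_le_iff₀ (by positivity)] at h1
      rw [hVdef]; linarith
    have hV2 : V ≤ S + 2*π := by
      have h1 : ((n:ℤ):ℝ) < (S-τ)/(2*π) + 1 := by rw [hndef]; exact Int.ceil_lt_add_one _
      have h2 : (2*π) * ((S-τ)/(2*π)) = S - τ := by field_simp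
      have h3 := mul_lt_mul_of_pos_left h1 (by positivity : (0:ℝ) < 2*π)
      rw [mul_add, h2, mul_one] at h3
      rw [hVdef]; linarith
    have h1κ : (0:ℝ) < 1 + κ := by linarith
    set xs : ℝ := x₁ + (V - S)/(1+κ) with hxsdef
    clear_value xs
    have hxs1 : x₁ ≤ xs := by
      rw [hxsdef]
      have : 0 ≤ (V - S)/(1+κ) := div_nonneg (by linarith) (by linarith)
      linarith
    have hxs2 : xs ≤ x₁ + 2*π := by
      rw [hxsdef]
      have h2 : (V - S)/(1+κ) ≤ V - S := by
        apply div_le_self (by linarith) (by linarith)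
      linarith
    have hxsmem : xs ∈ Set.Icc x₀ (x₀ + ((J:ℝ)+6)*π) := by
      constructor
      · linarith
      · have h5 := mul_nonneg hJpos.le hπ.le
        linarith
    have hsum : xs + y xs = V := by
      rw [hxsdef, hydef, hSdef]
      simp only [hydef]
      field_simp
      ring
    have hcosV : cos V = cos τ := by
      rw [hVdef, mul_comm (2*π) (n:ℝ)]
      exact Real.cos_add_int_mul_two_pi τ n
    have hprod : sin xs * sin (y xs) = (cos (xs - y xs) - cos τ)/2 := by
      have h1 := Real.cos_sub_cos (xs - y xs) (xs + y xs)
      rw [show (xs - y xs + (xs + y xs))/2 = xs by ring,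
        show (xs - y xs - (xs + y xs))/2 = -(y xs) by ring, Real.sin_neg] at h1
      rw [hsum, hcosV] at h1
      linarith
    have hzd : |(xs - y xs) - z₁| ≤ 2*η := by
      have h1 : (xs - y xs) - z₁ = (1-κ)*(xs - x₁) := by
        rw [hz₁def]; simp only [hydef]; ring
      rw [h1, abs_of_nonneg (mul_nonneg (by linarith) (by linarith))]
      have h2 := mul_le_mul_of_nonneg_left (show xs - x₁ ≤ 2*π by linarith)
        (show (0:ℝ) ≤ 1-κ by linarith)
      linarith [h2, hκη]
    have hclose : |cos (xs - y xs) - c₀| ≤ 2*η := by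
      rw [hc₀def]
      calc |cos (xs - y xs) - cos z₁| ≤ |(xs - y xs) - z₁| := cos_lip _ _
        _ ≤ 2*η := hzd
    have hεle : ε ≤ 1/2 - r := min_le_left _ _
    have hesc : |sin xs * sin (y xs)| ≤ r := by
      simp only [hydef]; exact (hcon xs hxsmem).1
    rcases le_or_gt 0 c₀ with hsgn | hsgn
    · have hτπ : τ = π := by rw [hτdef, if_pos hsgn]
      rw [hτπ, Real.cos_pi] at hprod
      have h2 := abs_le.1 hclose
      have h3 : r < sin xs * sin (y xs) := by
        rw [hprod]; linarith
      have h4 : |sin xs * sin (y xs)| ≤ r := hesc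
      have := abs_le.1 h4
      linarith
    · have hτ0 : τ = 0 := by rw [hτdef, if_neg (not_le.2 hsgn)]
      rw [hτ0, Real.cos_zero] at hprod
      have h2 := abs_le.1 hclose
      have h3 : sin xs * sin (y xs) < -r := by
        rw [hprod]; linarith
      have h4 : |sin xs * sin (y xs)| ≤ r := hesc
      have := abs_le.1 h4
      linarith

lemma mid {r a : ℝ} (hr0 : 0 < r) (hr : r < 1/2) (ha0 : 0 < a) (hra : a^2 + r^2 < 1) :
    ∃ T : ℝ, 0 < T ∧ ∀ A B α β : ℝ, α^2 + β^2 = 1/2 →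
      ∃ t ∈ Set.Icc (0:ℝ) T,
        r < |sin (A + t*α) * sin (B + t*β)| ∨ a < cos (A + t*α) * cos (B + t*β) := by
  obtain ⟨L, hL, hcore⟩ := core hr0 hr ha0 hra
  have aux3 : ∀ A B α β : ℝ, 1/2 ≤ α → 0 ≤ β → β ≤ α →
      ∃ t ∈ Set.Icc (0:ℝ) (2*L),
        r < |sin (A + t*α) * sin (B + t*β)| ∨ a < cos (A + t*α) * cos (B + t*β) := by
    intro A B α β hα hβ0 hβα
    have hα0 : 0 < α := by linarith
    obtain ⟨x, hx, hesc⟩ := hcore (β/α) A B (div_nonneg hβ0 hα0.le)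
      ((div_le_one hα0).2 hβα)
    refine ⟨(x - A)/α, ⟨div_nonneg (by linarith [hx.1]) hα0.le, ?_⟩, ?_⟩
    · rw [div_le_iff₀ hα0]
      have h1 : x - A ≤ L := by linarith [hx.2]
      nlinarith
    · have e1 : A + (x - A)/α*α = x := by field_simp; ring
      have e2 : B + (x - A)/α*β = B + β/α*(x - A) := by field_simp
      rw [e1, e2]
      exact hesc
  have aux2 : ∀ A B α β : ℝ, 1/2 ≤ α → |β| ≤ α →
      ∃ t ∈ Set.Icc (0:ℝ) (2*L),
        r < |sin (A + t*α) * sin (B + t*β)| ∨ a < cos (A + t*α) * cos (B + t*β) := by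
    intro A B α β hα hβα
    rcases le_or_gt 0 β with hβ | hβ
    · exact aux3 A B α β hα hβ (by rw [abs_of_nonneg hβ] at hβα; exact hβα)
    · obtain ⟨t, ht, hesc⟩ := aux3 A (-B) α (-β) hα (by linarith)
        (by rw [abs_of_neg hβ] at hβα; exact hβα)
      refine ⟨t, ht, ?_⟩
      have h1 : -B + t*(-β) = -(B + t*β) := by ring
      rw [h1, Real.sin_neg, Real.cos_neg, mul_neg, abs_neg] at hesc
      exact hesc
  have aux1 : ∀ A B α β : ℝ, 1/2 ≤ |α| → |β| ≤ |α| →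
      ∃ t ∈ Set.Icc (0:ℝ) (2*L),
        r < |sin (A + t*α) * sin (B + t*β)| ∨ a < cos (A + t*α) * cos (B + t*β) := by
    intro A B α β hα hβα
    rcases le_or_gt 0 α with hαs | hαs
    · rw [abs_of_nonneg hαs] at hα hβα
      exact aux2 A B α β hα hβα
    · rw [abs_of_neg hαs] at hα hβα
      obtain ⟨t, ht, hesc⟩ := aux2 (-A) (-B) (-α) (-β) hα (by rwa [abs_neg])
      refine ⟨t, ht, ?_⟩
      have h1 : -A + t*(-α) = -(A + t*α) := by ring
      have h2 : -B + t*(-β) = -(B + t*β) := by ring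
      rw [h1, h2, Real.sin_neg, Real.sin_neg, Real.cos_neg, Real.cos_neg,
        neg_mul_neg, abs_mul] at hesc
      rw [abs_mul]
      exact hesc
  refine ⟨2*L, by linarith, ?_⟩
  intro A B α β hαβ
  have habs : ∀ u : ℝ, u^2 = |u|^2 := fun u => (sq_abs u).symm
  rcases le_or_gt (α^2) (β^2) with hc | hc
  · have hβ : 1/2 ≤ |β| := by
      have h1 : 1/4 ≤ β^2 := by linarith
      nlinarith [abs_nonneg β, sq_abs β]
    have hαβ' : |α| ≤ |β| := by
      nlinarith [abs_nonneg β, abs_nonneg α, sq_abs β, sq_abs α]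
    obtain ⟨t, ht, hesc⟩ := aux1 B A β α hβ hαβ'
    refine ⟨t, ht, ?_⟩
    rcases hesc with h | h
    · left; rw [mul_comm] at h; exact h
    · right; rw [mul_comm] at h; exact h
  · have hα : 1/2 ≤ |α| := by
      have h1 : 1/4 ≤ α^2 := by linarith
      nlinarith [abs_nonneg α, sq_abs α]
    have hαβ' : |β| ≤ |α| := by
      nlinarith [abs_nonneg β, abs_nonneg α, sq_abs β, sq_abs α]
    exact aux1 A B α β hα hαβ'

theorem uniform_finite_horizon
    (l r : ℝ) (hl : 2 < l) (hl' : l < 3) (hr : 0 < r) (hr' : r < 1/2)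
    (hlr : (l - 2) ^ 2 + r ^ 2 < 1) :
    ∃ T : ℝ, 0 < T ∧ ∀ θ₀ φ₀ v w : ℝ, v ^ 2 + w ^ 2 = 1 →
      ∃ t ∈ Set.Icc (0:ℝ) T,
        ¬ (|cos (θ₀ + t * v) - cos (φ₀ + t * w)| ≤ 2 * r ∧
           cos (θ₀ + t * v) + cos (φ₀ + t * w) ≤ 2 * l - 4) := by
  obtain ⟨T, hT, hmid⟩ := mid (a := l - 2) hr hr' (by linarith) hlr
  refine ⟨T, hT, ?_⟩
  intro θ₀ φ₀ v w hv
  have hαβ : ((v+w)/2)^2 + ((v-w)/2)^2 = 1/2 := by nlinarith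
  obtain ⟨t, ht, hesc⟩ := hmid ((θ₀+φ₀)/2) ((θ₀-φ₀)/2) ((v+w)/2) ((v-w)/2) hαβ
  refine ⟨t, ht, ?_⟩
  rintro ⟨h1, h2⟩
  have eθ : (θ₀ + t*v + (φ₀ + t*w))/2 = (θ₀+φ₀)/2 + t*((v+w)/2) := by ring
  have eφ : (θ₀ + t*v - (φ₀ + t*w))/2 = (θ₀-φ₀)/2 + t*((v-w)/2) := by ring
  have hd : cos (θ₀ + t*v) - cos (φ₀ + t*w)
      = -2 * (sin ((θ₀+φ₀)/2 + t*((v+w)/2)) * sin ((θ₀-φ₀)/2 + t*((v-w)/2))) := by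
    rw [Real.cos_sub_cos, eθ, eφ]; ring
  have hs : cos (θ₀ + t*v) + cos (φ₀ + t*w)
      = 2 * (cos ((θ₀+φ₀)/2 + t*((v+w)/2)) * cos ((θ₀-φ₀)/2 + t*((v-w)/2))) := by
    rw [Real.cos_add_cos, eθ, eφ]; ring
  rcases hesc with h | h
  · have h3 : |cos (θ₀ + t*v) - cos (φ₀ + t*w)|
        = 2 * |sin ((θ₀+φ₀)/2 + t*((v+w)/2)) * sin ((θ₀-φ₀)/2 + t*((v-w)/2))| := by
      rw [hd, abs_mul]
      norm_num
    rw [h3] at h1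
    linarith
  · rw [hs] at h2
    linarith
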